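/- Let G be a finite simple graph equipped with an acyclic orientation R, and let H be a finite simple graph. Then the number of graph homomorphisms from H to G equals the sum, over all acyclic orientations S of H, of the number of maps φ : V(H) → V(G) such that for all u, v ∈ V(H), S u v implies R (φ u) (φ v). -/

import Mathlib

/-- `R` is an acyclic orientation of the simple graph `G`: every arc is an edge,
every edge gets exactly one direction, and there are no directed cycles. -/
def IsAcyclicOrientation {V : Type*} (G : SimpleGraph V) (R : V → V → Prop) : Prop :=
  (∀ u v, R u v → G.Adj u v) ∧
  (∀ u v, G.Adj u v ↔ Xor' (R u v) (R v u)) ∧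
  Irreflexive (Relation.TransGen R)

section Aux

variable {VH VG : Type*} (G : SimpleGraph VG) (H : SimpleGraph VH)
  (R : VG → VG → Prop)

/-- Pull back the orientation `R` along a map `φ`. -/
def pullOrient (φ : VH → VG) : VH → VH → Prop :=
  fun u v => H.Adj u v ∧ R (φ u) (φ v)

variable {G H R}

lemma pullOrient_isAcyclic (hR : IsAcyclicOrientation G R) (φ : H →g G) :
    IsAcyclicOrientation H (pullOrient H R φ) := by
  obtain ⟨hR1, hR2, hR3⟩ := hR
  refine ⟨fun u v h => h.1, fun u v => ?_, fun u h => ?_⟩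
  · constructor
    · intro h
      have hx := (hR2 (φ u) (φ v)).mp (φ.map_adj h)
      rcases hx with ⟨h1, h2⟩ | ⟨h1, h2⟩
      · exact Or.inl ⟨⟨h, h1⟩, fun hc => h2 hc.2⟩
      · exact Or.inr ⟨⟨h.symm, h1⟩, fun hc => h2 hc.2⟩
    · rintro (⟨h1, _⟩ | ⟨h1, _⟩)
      · exact h1.1
      · exact h1.1.symm
  · exact hR3 (φ u) (Relation.TransGen.lift φ (fun a b hab => hab.2) u u h)

lemma hom_of_pull (hR : IsAcyclicOrientation G R) {S : VH → VH → Prop}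
    (hS : IsAcyclicOrientation H S) {φ : VH → VG}
    (hφ : ∀ u v, S u v → R (φ u) (φ v)) {u v : VH} (h : H.Adj u v) :
    G.Adj (φ u) (φ v) := by
  rcases (hS.2.1 u v).mp h with ⟨h1, _⟩ | ⟨h1, _⟩
  · exact hR.1 _ _ (hφ _ _ h1)
  · exact (hR.1 _ _ (hφ _ _ h1)).symm

lemma pull_eq (hR : IsAcyclicOrientation G R) {S : VH → VH → Prop}
    (hS : IsAcyclicOrientation H S) {φ : VH → VG}
    (hφ : ∀ u v, S u v → R (φ u) (φ v)) :
    pullOrient H R φ = S := by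
  funext u v
  apply propext
  constructor
  · rintro ⟨hadj, hr⟩
    rcases (hS.2.1 u v).mp hadj with ⟨h1, _⟩ | ⟨h1, _⟩
    · exact h1
    · exfalso
      have hr' := hφ _ _ h1
      have := (hR.2.1 (φ u) (φ v)).mp (hom_of_pull hR hS hφ hadj)
      rcases this with ⟨_, h2⟩ | ⟨_, h2⟩
      · exact h2 hr'
      · exact h2 hr
  · intro h
    exact ⟨hS.1 _ _ h, hφ _ _ h⟩

/-- The key bijection. -/
noncomputable def homEquivSigma (hR : IsAcyclicOrientation G R) :
    (H →g G) ≃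
      Σ S : {S : VH → VH → Prop // IsAcyclicOrientation H S},
        {φ : VH → VG // ∀ u v, S.1 u v → R (φ u) (φ v)} where
  toFun φ := ⟨⟨pullOrient H R φ, pullOrient_isAcyclic hR φ⟩, ⟨φ, fun _ _ h => h.2⟩⟩
  invFun x := ⟨x.2.1, fun h => hom_of_pull hR x.1.2 x.2.2 h⟩
  left_inv φ := rfl
  right_inv := by
    rintro ⟨⟨S, hS⟩, ⟨φ, hφ⟩⟩
    obtain rfl : S = pullOrient H R φ := (pull_eq hR hS hφ).symm
    rfl

end Aux

/-- The number of graph homomorphisms from `H` to `G` equals the sum, over all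
acyclic orientations `S` of `H`, of the number of maps `φ : V(H) → V(G)` that
carry every arc of `S` to an arc of the acyclic orientation `R` of `G`. -/
theorem hom_count_eq_sum_over_acyclic_orientations
    {VH VG : Type*} [Fintype VH] [Fintype VG]
    (G : SimpleGraph VG) (H : SimpleGraph VH)
    (R : VG → VG → Prop) (hR : IsAcyclicOrientation G R) :
    Nat.card (H →g G) =
      ∑ᶠ S ∈ {S : VH → VH → Prop | IsAcyclicOrientation H S},
        Nat.card {φ : VH → VG // ∀ u v, S u v → R (φ u) (φ v)} := by
  classical
  rw [← finsum_set_coe_eq_finsum_mem, finsum_eq_sum_of_fintype,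
    Nat.card_congr (homEquivSigma hR)]
  rw [Nat.card_eq_fintype_card, Fintype.card_sigma]
  exact Finset.sum_congr rfl (fun S _ => (Nat.card_eq_fintype_card).symm)
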